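/- arXiv:0804.0829 — 2 statements merged into one kernel-verified Lean document; each statement's English description precedes it below -/
import Mathlib

section
/- The system x̄' = -ȳ + x̄^2, ȳ' = x̄ - z̄, z̄' = μ̄ + a x̄ + b z̄ admits a solution that is a polynomial vector function of t if and only if μ̄ = -a(a+b)/(2b^2); in that case the solution is x̄(t) = x̄_0 + αt, ȳ(t) = (x̄_0 + αt)^2 - α, z̄(t) = (1 - 2α)(x̄_0 + αt) with α = (a+b)/(2b), for any x̄_0 ∈ R. -/
/-- A function is a real polynomial function of `t`. -/
def IsPolynomialFun (f : ℝ → ℝ) : Prop := ∃ p : Polynomial ℝ, ∀ t, f t = p.eval t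

open Polynomial

lemma hd_lin (c x₀ : ℝ) (t : ℝ) : HasDerivAt (fun t => x₀ + c * t) c t := by
  simpa using ((hasDerivAt_id t).const_mul c).const_add x₀

lemma sol1 (c x₀ t : ℝ) :
    HasDerivAt (fun t => x₀ + c * t) (-((x₀ + c * t) ^ 2 - c) + (x₀ + c * t) ^ 2) t := by
  convert hd_lin c x₀ t using 1; ring

lemma sol2 (c x₀ t : ℝ) :
    HasDerivAt (fun t => (x₀ + c * t) ^ 2 - c)
      ((x₀ + c * t) - (1 - 2 * c) * (x₀ + c * t)) t := by
  have h := ((hd_lin c x₀ t).pow 2).sub_const c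
  refine h.congr_deriv ?_; ring

lemma sol3 (a b μ : ℝ) (hb : b ≠ 0) (hμ : μ = -(a * (a + b)) / (2 * b ^ 2)) (x₀ t : ℝ) :
    HasDerivAt (fun t => (1 - 2 * ((a + b) / (2 * b))) * (x₀ + ((a + b) / (2 * b)) * t))
      (μ + a * (x₀ + ((a + b) / (2 * b)) * t) +
        b * ((1 - 2 * ((a + b) / (2 * b))) * (x₀ + ((a + b) / (2 * b)) * t))) t := by
  have h := (hd_lin ((a + b) / (2 * b)) x₀ t).const_mul (1 - 2 * ((a + b) / (2 * b)))
  refine h.congr_deriv ?_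
  subst hμ; field_simp; ring

lemma forward (a b μ : ℝ) (hb : b ≠ 0) (hab : a + b ≠ 0)
    (x y z : ℝ → ℝ)
    (hp' : ∃ p : Polynomial ℝ, ∀ t, x t = p.eval t)
    (hq' : ∃ p : Polynomial ℝ, ∀ t, y t = p.eval t)
    (hr' : ∃ p : Polynomial ℝ, ∀ t, z t = p.eval t)
    (hx : ∀ t, HasDerivAt x (-(y t) + (x t) ^ 2) t)
    (hy : ∀ t, HasDerivAt y (x t - z t) t)
    (hz : ∀ t, HasDerivAt z (μ + a * x t + b * z t) t)
    (hnc : ∃ t₀, x t₀ ≠ x 0) : μ = -(a * (a + b)) / (2 * b ^ 2) := by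
  obtain ⟨p, hp⟩ := hp'
  obtain ⟨q, hq⟩ := hq'
  obtain ⟨r, hr⟩ := hr'
  obtain ⟨t₀, ht₀⟩ := hnc
  have hxf : x = fun t => p.eval t := funext hp
  have hyf : y = fun t => q.eval t := funext hq
  have hzf : z = fun t => r.eval t := funext hr
  subst hxf hyf hzf
  have Ep : derivative p = -q + p ^ 2 := by
    apply Polynomial.funext
    intro t
    have := (p.hasDerivAt t).unique (hx t)
    simpa using this
  have Eq' : derivative q = p - r := by
    apply Polynomial.funext
    intro t
    have := (q.hasDerivAt t).unique (hy t)
    simpa using this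
  have Ez : derivative r = C μ + C a * p + C b * r := by
    apply Polynomial.funext
    intro t
    have := (r.hasDerivAt t).unique (hz t)
    simpa using this
  have hqe : q = p ^ 2 - derivative p := by linear_combination Ep
  have hre : r = p - derivative q := by linear_combination Eq'
  -- p is nonconstant
  have hn1 : 1 ≤ p.natDegree := by
    by_contra h
    push_neg at h
    interval_cases h' : p.natDegree
    · exact ht₀ (by rw [p.eq_C_of_natDegree_eq_zero h']; simp)
  have hpne : p ≠ 0 := fun h => by simp [h] at hn1
  set n := p.natDegree with hn
  have hc : p.coeff n ≠ 0 := Polynomial.leadingCoeff_ne_zero.mpr hpne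
  -- rule out n ≥ 2
  have hn2 : ¬ 2 ≤ n := by
    intro h2
    -- coefficients of q
    have hq2n : q.coeff (2 * n) = p.coeff n * p.coeff n := by
      rw [hqe, coeff_sub, coeff_derivative,
        coeff_eq_zero_of_natDegree_lt (show p.natDegree < 2 * n + 1 by omega)]
      have : (p ^ 2).coeff (2 * n) = p.coeff n * p.coeff n := by
        rw [sq, show 2 * n = p.natDegree + p.natDegree by omega,
          coeff_mul_degree_add_degree]
        rfl
      rw [this]; ring
    have hq2n1 : q.coeff (2 * n + 1) = 0 := by
      rw [hqe, coeff_sub, coeff_derivative,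
        coeff_eq_zero_of_natDegree_lt (show p.natDegree < 2 * n + 2 by omega),
        coeff_eq_zero_of_natDegree_lt
          (lt_of_le_of_lt (p.natDegree_pow_le (n := 2)) (by omega))]
      ring
    -- coefficients of r
    have hr2n1 : r.coeff (2 * n - 1) = -(p.coeff n * p.coeff n * (2 * n)) := by
      have hcast : ((2 * n - 1 : ℕ) : ℝ) + 1 = 2 * n := by
        have h1 : (1 : ℕ) ≤ 2 * n := by omega
        push_cast [Nat.cast_sub h1]
        ring
      rw [hre, coeff_sub, coeff_derivative,
        coeff_eq_zero_of_natDegree_lt (show p.natDegree < 2 * n - 1 by omega),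
        show 2 * n - 1 + 1 = 2 * n by omega, hq2n, hcast]
      ring
    have hr2n : r.coeff (2 * n) = 0 := by
      rw [hre, coeff_sub, coeff_derivative,
        coeff_eq_zero_of_natDegree_lt (show p.natDegree < 2 * n by omega), hq2n1]
      ring
    -- coefficient 2n-1 of Ez
    have h0 := congrArg (fun s => Polynomial.coeff s (2 * n - 1)) Ez
    simp only [coeff_derivative, coeff_add, coeff_C_mul, coeff_C,
      if_neg (show 2 * n - 1 ≠ 0 by omega), show 2 * n - 1 + 1 = 2 * n by omega,
      hr2n, hr2n1, coeff_eq_zero_of_natDegree_lt (show p.natDegree < 2 * n - 1 by omega)]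
      at h0
    have hnne : (2 * (n:ℝ)) ≠ 0 := by positivity
    have hmul : b * -(p.coeff n * p.coeff n * (2 * ↑n)) ≠ 0 :=
      mul_ne_zero hb (neg_ne_zero.mpr (mul_ne_zero (mul_ne_zero hc hc) hnne))
    exact hmul (by linarith)
  have hne1 : n = 1 := by omega
  -- explicit form of p
  have hp0 : p = C (p.coeff 1) * X + C (p.coeff 0) :=
    p.eq_X_add_C_of_natDegree_le_one (by omega)
  set α := p.coeff 1 with hα
  set x₀ := p.coeff 0 with hx₀
  have hαne : α ≠ 0 := by rw [hα, show (1 : ℕ) = n from hne1.symm]; exact hc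
  have hxval : ∀ t, p.eval t = x₀ + α * t := by
    intro t; rw [hp0]; simp; ring
  -- derive y explicitly
  have hxd : ∀ t, HasDerivAt (fun t => p.eval t) α t := by
    intro t
    have := hd_lin α x₀ t
    simpa [funext hxval] using this
  have hyval : ∀ t : ℝ, q.eval t = (x₀ + α * t) ^ 2 - α := by
    intro t
    have := (hxd t).unique (hx t)
    have h2 := hxval t
    simp only [h2] at this ⊢
    linarith
  have hyd : ∀ t, HasDerivAt (fun t => q.eval t) (2 * (x₀ + α * t) * α) t := by
    intro t
    have := ((hd_lin α x₀ t).pow 2).sub_const α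
    simp only [funext hyval]
    refine this.congr_deriv ?_
    ring
  have hzval : ∀ t : ℝ, r.eval t = (1 - 2 * α) * (x₀ + α * t) := by
    intro t
    have := (hyd t).unique (hy t)
    have h2 := hxval t
    simp only [h2] at this ⊢
    linarith
  have hzd : ∀ t, HasDerivAt (fun t => r.eval t) ((1 - 2 * α) * α) t := by
    intro t
    have := (hd_lin α x₀ t).const_mul (1 - 2 * α)
    simpa [funext hzval] using this
  have key : ∀ t : ℝ, (1 - 2 * α) * α = μ + a * (x₀ + α * t) +
      b * ((1 - 2 * α) * (x₀ + α * t)) := by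
    intro t
    have := (hzd t).unique (hz t)
    simpa [hxval t, hzval t] using this
  have e0 := key 0
  have e1 := key 1
  have h2 : (a + b * (1 - 2 * α)) * α = 0 := by linear_combination e0 - e1
  have h3 : a + b * (1 - 2 * α) = 0 := by
    rcases mul_eq_zero.mp h2 with h | h
    · exact h
    · exact absurd h hαne
  have hαval : α = (a + b) / (2 * b) := by
    field_simp
    linarith
  have hμval : μ = (1 - 2 * α) * α := by linear_combination -e0 - x₀ * h3
  rw [hμval, hαval]
  field_simp
  ring

/-- The system x' = -y + x², y' = x - z, z' = μ + ax + bz admits a (nonconstant)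
polynomial vector solution iff μ = -a(a+b)/(2b²); in that case, for any x₀,
x(t) = x₀ + αt, y(t) = (x₀+αt)² - α, z(t) = (1-2α)(x₀+αt) with α = (a+b)/(2b)
is a solution. -/
theorem polynomial_solution_iff (a b μ : ℝ) (hb : b ≠ 0) (hab : a + b ≠ 0) :
    ((∃ x y z : ℝ → ℝ,
        IsPolynomialFun x ∧ IsPolynomialFun y ∧ IsPolynomialFun z ∧
        (∀ t, HasDerivAt x (-(y t) + (x t) ^ 2) t) ∧
        (∀ t, HasDerivAt y (x t - z t) t) ∧
        (∀ t, HasDerivAt z (μ + a * x t + b * z t) t) ∧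
        (∃ t₀, x t₀ ≠ x 0)) ↔ μ = -(a * (a + b)) / (2 * b ^ 2)) ∧
    (μ = -(a * (a + b)) / (2 * b ^ 2) → ∀ x₀ : ℝ,
      (∀ t, HasDerivAt (fun t => x₀ + ((a + b) / (2 * b)) * t)
          (-((x₀ + ((a + b) / (2 * b)) * t) ^ 2 - (a + b) / (2 * b)) +
            (x₀ + ((a + b) / (2 * b)) * t) ^ 2) t) ∧
      (∀ t, HasDerivAt (fun t => (x₀ + ((a + b) / (2 * b)) * t) ^ 2 - (a + b) / (2 * b))
          ((x₀ + ((a + b) / (2 * b)) * t) -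
            (1 - 2 * ((a + b) / (2 * b))) * (x₀ + ((a + b) / (2 * b)) * t)) t) ∧
      (∀ t, HasDerivAt (fun t => (1 - 2 * ((a + b) / (2 * b))) * (x₀ + ((a + b) / (2 * b)) * t))
          (μ + a * (x₀ + ((a + b) / (2 * b)) * t) +
            b * ((1 - 2 * ((a + b) / (2 * b))) * (x₀ + ((a + b) / (2 * b)) * t))) t)) := by
  constructor
  · constructor
    · rintro ⟨x, y, z, hpx, hpy, hpz, hx, hy, hz, hnc⟩
      exact forward a b μ hb hab x y z hpx hpy hpz hx hy hz hnc
    · intro hμ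
      set α := (a + b) / (2 * b) with hα
      have hαne : α ≠ 0 := div_ne_zero hab (mul_ne_zero two_ne_zero hb)
      refine ⟨fun t => 0 + α * t, fun t => (0 + α * t) ^ 2 - α,
        fun t => (1 - 2 * α) * (0 + α * t), ?_, ?_, ?_, ?_, ?_, ?_, ?_⟩
      · exact ⟨Polynomial.C α * Polynomial.X, by intro t; simp⟩
      · exact ⟨(Polynomial.C α * Polynomial.X) ^ 2 - Polynomial.C α, by intro t; simp⟩
      · exact ⟨Polynomial.C (1 - 2 * α) * (Polynomial.C α * Polynomial.X),
          by intro t; simp⟩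
      · exact fun t => sol1 α 0 t
      · exact fun t => sol2 α 0 t
      · exact fun t => sol3 a b μ hb hμ 0 t
      · exact ⟨1, by simpa using hαne⟩
  · intro hμ x₀
    exact ⟨fun t => sol1 _ _ t, fun t => sol2 _ _ t, fun t => sol3 a b μ hb hμ x₀ t⟩
end

section
/- If (x̄(t), ȳ(t), z̄(t)) is a solution of x̄' = -ȳ + x̄^2, ȳ' = x̄ - z̄, z̄' = μ̄ + a x̄ + b z̄ whose components are all polynomials in t, then deg x̄ ≤ 1, deg z̄ ≤ 1, and deg ȳ ≤ 2. -/
open Polynomial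


/-- If (x̄, ȳ, z̄) is a solution of x' = -y + x², y' = x - z, z' = μ + ax + bz
whose components are polynomials in t, then deg x̄ ≤ 1, deg z̄ ≤ 1, deg ȳ ≤ 2. -/
theorem polynomial_solution_degrees (a b μ : ℝ) (p q r : Polynomial ℝ)
    (hx : ∀ t, HasDerivAt (fun s => p.eval s) (-(q.eval t) + (p.eval t) ^ 2) t)
    (hy : ∀ t, HasDerivAt (fun s => q.eval s) (p.eval t - r.eval t) t)
    (hz : ∀ t, HasDerivAt (fun s => r.eval s) (μ + a * p.eval t + b * r.eval t) t) :
    p.natDegree ≤ 1 ∧ r.natDegree ≤ 1 ∧ q.natDegree ≤ 2 := by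
  have h1 : derivative p = -q + p ^ 2 := by
    apply Polynomial.funext; intro t
    simpa using (Polynomial.hasDerivAt p t).unique (hx t)
  have h2 : derivative q = p - r := by
    apply Polynomial.funext; intro t
    simpa using (Polynomial.hasDerivAt q t).unique (hy t)
  have h3 : derivative r = C μ + C a * p + C b * r := by
    apply Polynomial.funext; intro t
    simpa using (Polynomial.hasDerivAt r t).unique (hz t)
  have hq : q = p ^ 2 - derivative p := by rw [h1]; ring
  have hr : r = p - derivative q := by rw [h2]; ring
  -- main claim: natDegree p ≤ 1
  have hp1 : p.natDegree ≤ 1 := by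
    by_contra hcon
    push_neg at hcon
    obtain ⟨m, hm⟩ : ∃ m, p.natDegree = m + 2 := ⟨p.natDegree - 2, by omega⟩
    set c : ℝ := p.coeff (m + 2) with hc_def
    have hpne : p ≠ 0 := fun h0 => by simp [h0] at hm
    have hc : c ≠ 0 := by
      have := Polynomial.leadingCoeff_ne_zero.mpr hpne
      rwa [Polynomial.leadingCoeff, hm] at this
    -- coefficients of p above its degree vanish
    have cp : ∀ k, m + 2 < k → p.coeff k = 0 := fun k hk =>
      coeff_eq_zero_of_natDegree_lt (by omega)
    -- p^2 coefficients
    have csq : (p ^ 2).coeff (2 * m + 4) = c * c := by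
      have h := Polynomial.coeff_mul_degree_add_degree p p
      rw [hm] at h
      rw [sq]
      have : m + 2 + (m + 2) = 2 * m + 4 := by omega
      rw [this] at h
      simpa [Polynomial.leadingCoeff, hm] using h
    have csqh : ∀ k, 2 * m + 4 < k → (p ^ 2).coeff k = 0 := fun k hk => by
      apply coeff_eq_zero_of_natDegree_lt
      calc (p ^ 2).natDegree ≤ 2 * p.natDegree := natDegree_pow_le
        _ < k := by omega
    -- q coefficients
    have cq : ∀ k, 2 * m + 4 < k → q.coeff k = 0 := fun k hk => by
      rw [hq, coeff_sub, coeff_derivative, csqh k hk, cp (k + 1) (by omega)]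
      ring
    have cq4 : q.coeff (2 * m + 4) = c * c := by
      rw [hq, coeff_sub, coeff_derivative, csq, cp (2 * m + 4 + 1) (by omega)]
      ring
    -- r coefficients
    have cr : ∀ k, 2 * m + 3 < k → r.coeff k = 0 := fun k hk => by
      rw [hr, coeff_sub, coeff_derivative, cp k (by omega), cq (k + 1) (by omega)]
      ring
    have cr3 : r.coeff (2 * m + 3) = -(c * c * (2 * m + 4)) := by
      rw [hr, coeff_sub, coeff_derivative, cp (2 * m + 3) (by omega), cq4]
      push_cast
      ring
    -- coeff of h3 at 2m+3 : gives b = 0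
    have hb : b = 0 := by
      have h := congrArg (fun s => Polynomial.coeff s (2 * m + 3)) h3
      simp only [coeff_derivative, coeff_add, coeff_C_mul, coeff_C,
        if_neg (by omega : ¬(2 * m + 3 = 0))] at h
      rw [show 2 * m + 3 + 1 = 2 * m + 4 from rfl] at h
      rw [cr (2 * m + 4) (by omega), cp (2 * m + 3) (by omega), cr3] at h
      have h' : b * (c * c * ((2 * (m:ℝ)) + 4)) = 0 := by push_cast at h ⊢; linarith
      have hne : c * c * ((2 * (m:ℝ)) + 4) ≠ 0 :=
        mul_ne_zero (mul_ne_zero hc hc) (by positivity)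
      exact (mul_eq_zero.mp h').resolve_right hne
    rw [hb] at h3
    -- coeff of h3 at 2m+2
    have h22 := congrArg (fun s => Polynomial.coeff s (2 * m + 2)) h3
    simp only [coeff_derivative, coeff_add, coeff_C_mul, coeff_C, map_zero, zero_mul,
      if_neg (by omega : ¬(2 * m + 2 = 0)), add_zero, zero_add] at h22
    rw [cr3] at h22
    rcases Nat.eq_zero_or_pos m with hm0 | hmpos
    · -- m = 0 : degree 2 case
      subst hm0
      rw [show 2 * 0 + 2 = 0 + 2 from rfl] at h22
      -- h22 : -(c*c*4)*3 = a * p.coeff 2, i.e. a*c = -12 c^2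
      -- need a = -12 c
      have ha : a = -12 * c := by
        have hac : a * c = (-12 * c) * c := by push_cast at h22; nlinarith [h22]
        exact mul_right_cancel₀ hc hac
      -- coeff of h3 at 1
      have h11 := congrArg (fun s => Polynomial.coeff s 1) h3
      simp only [coeff_derivative, coeff_add, coeff_C_mul, coeff_C, map_zero, zero_mul,
        if_neg (one_ne_zero), add_zero, zero_add] at h11
      -- compute r.coeff 2
      have cq3 : q.coeff 3 = 2 * c * p.coeff 1 := by
        rw [hq, coeff_sub, coeff_derivative, cp 4 (by omega)]
        have : (p ^ 2).coeff 3 = 2 * c * p.coeff 1 := by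
          rw [sq, coeff_mul, Finset.Nat.sum_antidiagonal_eq_sum_range_succ_mk]
          simp [Finset.sum_range_succ, cp 3 (by omega)]
          ring
        rw [this]; ring
      have cr2 : r.coeff 2 = c - 6 * c * p.coeff 1 := by
        rw [hr, coeff_sub, coeff_derivative, cq3]
        norm_num
        ring
      rw [cr2, ha] at h11
      norm_num at h11
      -- h11 : (c - 6*c*d)*2 = -12*c * d  where d = p.coeff 1
      apply hc
      nlinarith [h11]
    · -- m ≥ 1 : coeff p (2m+2) = 0
      rw [cp (2 * m + 2) (by omega)] at h22
      have h' : c * c * ((2 * (m:ℝ)) + 4) * ((2 * (m:ℝ)) + 3) = 0 := by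
        push_cast at h22 ⊢; nlinarith [h22]
      have hne : c * c * ((2 * (m:ℝ)) + 4) * ((2 * (m:ℝ)) + 3) ≠ 0 :=
        mul_ne_zero (mul_ne_zero (mul_ne_zero hc hc) (by positivity)) (by positivity)
      exact hne h'
  -- conclude
  refine ⟨hp1, ?_, ?_⟩
  · rw [hr]
    calc (p - derivative q).natDegree ≤ max p.natDegree (derivative q).natDegree :=
        natDegree_sub_le _ _
      _ ≤ 1 := by
        apply max_le hp1
        calc (derivative q).natDegree ≤ q.natDegree - 1 := natDegree_derivative_le q
          _ ≤ 1 := by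
            have : q.natDegree ≤ 2 := by
              rw [hq]
              calc (p ^ 2 - derivative p).natDegree
                  ≤ max (p ^ 2).natDegree (derivative p).natDegree := natDegree_sub_le _ _
                _ ≤ 2 := by
                  apply max_le
                  · calc (p ^ 2).natDegree ≤ 2 * p.natDegree := natDegree_pow_le
                      _ ≤ 2 := by omega
                  · calc (derivative p).natDegree ≤ p.natDegree - 1 := natDegree_derivative_le p
                      _ ≤ 2 := by omega
            omega
  · rw [hq]
    calc (p ^ 2 - derivative p).natDegree
        ≤ max (p ^ 2).natDegree (derivative p).natDegree := natDegree_sub_le _ _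
      _ ≤ 2 := by
        apply max_le
        · calc (p ^ 2).natDegree ≤ 2 * p.natDegree := natDegree_pow_le
            _ ≤ 2 := by omega
        · calc (derivative p).natDegree ≤ p.natDegree - 1 := natDegree_derivative_le p
            _ ≤ 2 := by omega
end
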